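/- Let Z have density f on [0,∞) with f(0) = 1 and |f(x) − 1| ≤ K·x for all x ≥ 0, and let Y be exponential with mean 1. Let T_n be the sum of n i.i.d. copies of Z and S_n the sum of n i.i.d. copies of Y. Then for 0 < u ≤ 1, P(T_n ≤ u) ≤ e^{(1+K)u}·P(S_n ≤ u). -/

import Mathlib

open MeasureTheory ProbabilityTheory
open scoped ENNReal

lemma lintegral_fin_prod : ∀ {n : ℕ} (μ : Fin n → Measure ℝ), (∀ i, SigmaFinite (μ i)) →
    ∀ (h : Fin n → ℝ → ℝ≥0∞), (∀ i, Measurable (h i)) →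
    ∫⁻ x : Fin n → ℝ, ∏ i, h i (x i) ∂Measure.pi μ = ∏ i, ∫⁻ t, h i t ∂μ i := by
  intro n
  induction n with
  | zero =>
      intro μ _ h _
      simp [lintegral_const, Measure.pi_univ]
  | succ n ih =>
      intro μ hσ h hm
      haveI := hσ
      have key := (measurePreserving_piFinSuccAbove μ 0).symm
      calc ∫⁻ x : Fin (n+1) → ℝ, ∏ i, h i (x i) ∂Measure.pi μ
          = ∫⁻ y : ℝ × (Fin n → ℝ),
              h 0 y.1 * ∏ i : Fin n, h (Fin.succ i) (y.2 i)
              ∂((μ 0).prod (Measure.pi fun i => μ ((0 : Fin (n+1)).succAbove i))) := by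
            rw [← key.lintegral_comp (f := fun x : Fin (n+1) → ℝ => ∏ i, h i (x i))
              (Finset.measurable_prod _ (fun i _ => (hm i).comp (measurable_pi_apply i)))]
            congr 1
            ext y
            simp_rw [MeasurableEquiv.piFinSuccAbove_symm_apply, Fin.insertNthEquiv,
              Fin.prod_univ_succ, Fin.insertNth_zero, Equiv.coe_fn_mk, Fin.cons_succ,
              Fin.cons_zero, cast_eq]
        _ = (∫⁻ t, h 0 t ∂μ 0) * ∏ i : Fin n, ∫⁻ t, h (Fin.succ i) t ∂μ (Fin.succ i) := by
            rw [lintegral_prod_mul (f := h 0) (g := fun v : Fin n → ℝ => ∏ i, h (Fin.succ i) (v i))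
              (hm 0).aemeasurable
              (Finset.measurable_prod _ (fun i _ =>
                (hm (Fin.succ i)).comp (measurable_pi_apply i))).aemeasurable]
            congr 1
            have : (fun i : Fin n => μ ((0 : Fin (n+1)).succAbove i))
                = fun i : Fin n => μ (Fin.succ i) := by
              funext i; simp [Fin.zero_succAbove]
            rw [this, ih _ (fun i => hσ _) _ (fun i => hm _)]
        _ = ∏ i, ∫⁻ t, h i t ∂μ i := by rw [Fin.prod_univ_succ]

lemma my_pi_withDensity {n : ℕ} (g : Fin n → ℝ → ℝ≥0∞) (hg : ∀ i, Measurable (g i))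
    (hσ : ∀ i, SigmaFinite ((volume : Measure ℝ).withDensity (g i))) :
    Measure.pi (fun i => (volume : Measure ℝ).withDensity (g i)) =
      (Measure.pi fun _ : Fin n => (volume : Measure ℝ)).withDensity
        (fun x => ∏ i, g i (x i)) := by
  haveI := hσ
  refine Measure.pi_eq (fun s hs => ?_)
  rw [withDensity_apply _ (MeasurableSet.univ_pi hs)]
  have hind : ∀ x : Fin n → ℝ,
      (Set.univ.pi s).indicator (fun x : Fin n → ℝ => ∏ i, g i (x i)) x
        = ∏ i, (s i).indicator (g i) (x i) := by
    intro x
    by_cases hx : x ∈ Set.univ.pi s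
    · rw [Set.indicator_of_mem hx]
      exact Finset.prod_congr rfl (fun i _ =>
        (Set.indicator_of_mem (hx i (Set.mem_univ i)) _).symm)
    · rw [Set.indicator_of_notMem hx]
      simp only [Set.mem_pi, Set.mem_univ, forall_true_left] at hx
      push_neg at hx
      obtain ⟨j, hj⟩ := hx
      exact (Finset.prod_eq_zero (Finset.mem_univ j)
        (Set.indicator_of_notMem hj _)).symm
  rw [← lintegral_indicator (MeasurableSet.univ_pi hs)]
  simp_rw [hind]
  rw [lintegral_fin_prod _ (fun i => inferInstance) _
    (fun i => (hg i).indicator (hs i))]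
  exact Finset.prod_congr rfl (fun i _ => by
    rw [lintegral_indicator (hs i), withDensity_apply _ (hs i)])

lemma my_map_pi {Ω : Type*} [MeasureSpace Ω] [IsProbabilityMeasure (ℙ : Measure Ω)]
    {n : ℕ} (Z : Fin n → Ω → ℝ) (hmeas : ∀ i, Measurable (Z i))
    (hind : iIndepFun Z ℙ) :
    Measure.map (fun ω i => Z i ω) ℙ = Measure.pi (fun i => Measure.map (Z i) ℙ) := by
  haveI : ∀ i, IsProbabilityMeasure (Measure.map (Z i) ℙ) :=
    fun i => Measure.isProbabilityMeasure_map (hmeas i).aemeasurable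
  refine (Measure.pi_eq (fun s hs => ?_)).symm
  have hφ : Measurable (fun ω => fun i => Z i ω) :=
    measurable_pi_lambda _ (fun i => hmeas i)
  rw [Measure.map_apply hφ (MeasurableSet.univ_pi hs)]
  have hpre : (fun ω => fun i => Z i ω) ⁻¹' (Set.univ.pi s)
      = ⋂ i ∈ Finset.univ, Z i ⁻¹' s i := by
    ext ω; simp [Set.mem_pi]
  rw [hpre, hind.measure_inter_preimage_eq_mul Finset.univ (fun i _ => hs i)]
  exact Finset.prod_congr rfl (fun i _ =>
    (Measure.map_apply (hmeas i) (hs i)).symm)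

lemma my_pointwise {K u : ℝ} (hK : 0 < K) {f : ℝ → ℝ}
    (hf_lip : ∀ x : ℝ, 0 ≤ x → |f x - 1| ≤ K * x)
    (hf_nonneg : ∀ x, 0 ≤ f x) (hf_supp : ∀ x : ℝ, x < 0 → f x = 0)
    {n : ℕ} (x : Fin n → ℝ) (hx : ∑ i, x i ≤ u) :
    ∏ i, ENNReal.ofReal (f (x i)) ≤
      ENNReal.ofReal (Real.exp ((1 + K) * u)) * ∏ i, exponentialPDF 1 (x i) := by
  by_cases hpos : ∀ i, 0 ≤ x i
  · have hexp : ∀ i, exponentialPDF 1 (x i) = ENNReal.ofReal (Real.exp (-(x i))) := by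
      intro i
      rw [exponentialPDF_of_nonneg (hpos i)]
      norm_num
    simp_rw [hexp]
    rw [← ENNReal.ofReal_prod_of_nonneg (fun i _ => hf_nonneg (x i)),
      ← ENNReal.ofReal_prod_of_nonneg (fun i _ => (Real.exp_pos _).le),
      ← ENNReal.ofReal_mul (Real.exp_pos _).le]
    apply ENNReal.ofReal_le_ofReal
    have h1 : ∏ i, f (x i) ≤ Real.exp (K * ∑ i, x i) := by
      calc ∏ i, f (x i) ≤ ∏ i, Real.exp (K * x i) := by
            apply Finset.prod_le_prod (fun i _ => hf_nonneg (x i))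
            intro i _
            have h2 := (abs_le.mp (hf_lip (x i) (hpos i))).2
            have h3 := Real.add_one_le_exp (K * x i)
            linarith
        _ = Real.exp (∑ i, K * x i) := (Real.exp_sum _ _).symm
        _ = Real.exp (K * ∑ i, x i) := by rw [Finset.mul_sum]
    have h2 : ∏ i, Real.exp (-(x i)) = Real.exp (-∑ i, x i) := by
      rw [← Real.exp_sum, Finset.sum_neg_distrib]
    rw [h2, ← Real.exp_add]
    refine le_trans h1 (Real.exp_le_exp.mpr ?_)
    have hs0 : (0:ℝ) ≤ ∑ i, x i :=
      Finset.sum_nonneg (fun i _ => hpos i)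
    nlinarith
  · push_neg at hpos
    obtain ⟨j, hj⟩ := hpos
    rw [Finset.prod_eq_zero (Finset.mem_univ j)
      (by rw [hf_supp (x j) hj, ENNReal.ofReal_zero])]
    exact zero_le

theorem lipschitz_density_comparison
    {Ω : Type*} [MeasureSpace Ω] [IsProbabilityMeasure (ℙ : Measure Ω)]
    (K : ℝ) (hK : 0 < K) (f : ℝ → ℝ) (hf_meas : Measurable f)
    (hf0 : f 0 = 1) (hf_lip : ∀ x : ℝ, 0 ≤ x → |f x - 1| ≤ K * x)
    (hf_nonneg : ∀ x, 0 ≤ f x) (hf_supp : ∀ x : ℝ, x < 0 → f x = 0)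
    (n : ℕ) (hn : 1 ≤ n) (Z Y : Fin n → Ω → ℝ)
    (hZmeas : ∀ i, Measurable (Z i)) (hYmeas : ∀ i, Measurable (Y i))
    (hZindep : iIndepFun Z ℙ)
    (hYindep : iIndepFun Y ℙ)
    (hZdist : ∀ i, Measure.map (Z i) ℙ =
      volume.withDensity (fun x => ENNReal.ofReal (f x)))
    (hYdist : ∀ i, Measure.map (Y i) ℙ = expMeasure 1)
    (u : ℝ) (hu0 : 0 < u) (hu1 : u ≤ 1) :
    ℙ {ω | ∑ i, Z i ω ≤ u} ≤
      ENNReal.ofReal (Real.exp ((1 + K) * u)) * ℙ {ω | ∑ i, Y i ω ≤ u} := by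
  classical
  have i0 : Fin n := ⟨0, hn⟩
  set gZ : ℝ → ℝ≥0∞ := fun x => ENNReal.ofReal (f x) with hgZdef
  have hgZ : Measurable gZ := hf_meas.ennreal_ofReal
  have hgE : Measurable (exponentialPDF 1) :=
    (measurable_exponentialPDFReal 1).ennreal_ofReal
  haveI hPZ : IsProbabilityMeasure ((volume : Measure ℝ).withDensity gZ) := by
    rw [← hZdist i0]; exact Measure.isProbabilityMeasure_map (hZmeas i0).aemeasurable
  have hE : expMeasure 1 = (volume : Measure ℝ).withDensity (exponentialPDF 1) := rfl
  haveI hPE : IsProbabilityMeasure ((volume : Measure ℝ).withDensity (exponentialPDF 1)) := by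
    rw [← hE]; exact isProbabilityMeasure_expMeasure one_pos
  have hsum : Measurable (fun x : Fin n → ℝ => ∑ i, x i) :=
    Finset.measurable_sum _ (fun i _ => measurable_pi_apply i)
  set A : Set (Fin n → ℝ) := {x | ∑ i, x i ≤ u} with hAdef
  have hAm : MeasurableSet A := measurableSet_le hsum measurable_const
  have hZeq : ℙ {ω | ∑ i, Z i ω ≤ u}
      = ∫⁻ x in A, ∏ i, gZ (x i) ∂(Measure.pi fun _ : Fin n => (volume : Measure ℝ)) := by
    have hφ : Measurable (fun ω => fun i => Z i ω) :=
      measurable_pi_lambda _ hZmeas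
    have hset : {ω | ∑ i, Z i ω ≤ u} = (fun ω (i : Fin n) => Z i ω) ⁻¹' A := rfl
    rw [hset, ← Measure.map_apply hφ hAm, my_map_pi Z hZmeas hZindep]
    simp_rw [hZdist]
    rw [my_pi_withDensity _ (fun _ => hgZ) (fun _ => inferInstance),
      withDensity_apply _ hAm]
  have hYeq : ℙ {ω | ∑ i, Y i ω ≤ u}
      = ∫⁻ x in A, ∏ i, exponentialPDF 1 (x i)
          ∂(Measure.pi fun _ : Fin n => (volume : Measure ℝ)) := by
    have hφ : Measurable (fun ω => fun i => Y i ω) :=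
      measurable_pi_lambda _ hYmeas
    have hset : {ω | ∑ i, Y i ω ≤ u} = (fun ω (i : Fin n) => Y i ω) ⁻¹' A := rfl
    rw [hset, ← Measure.map_apply hφ hAm, my_map_pi Y hYmeas hYindep]
    simp_rw [hYdist, hE]
    rw [my_pi_withDensity _ (fun _ => hgE) (fun _ => inferInstance),
      withDensity_apply _ hAm]
  rw [hZeq, hYeq]
  calc ∫⁻ x in A, ∏ i, gZ (x i) ∂(Measure.pi fun _ : Fin n => (volume : Measure ℝ))
      ≤ ∫⁻ x in A, ENNReal.ofReal (Real.exp ((1 + K) * u)) * ∏ i, exponentialPDF 1 (x i)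
          ∂(Measure.pi fun _ : Fin n => (volume : Measure ℝ)) :=
        setLIntegral_mono' hAm (fun x hxA =>
          my_pointwise hK hf_lip hf_nonneg hf_supp x hxA)
    _ = ENNReal.ofReal (Real.exp ((1 + K) * u)) *
          ∫⁻ x in A, ∏ i, exponentialPDF 1 (x i)
            ∂(Measure.pi fun _ : Fin n => (volume : Measure ℝ)) :=
        lintegral_const_mul _ (Finset.measurable_prod _
          (fun i _ => hgE.comp (measurable_pi_apply i)))
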